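/- Let x: [0,∞) → ℝ be càdlàg with Σ_{0<s≤t} (Δx_s)² < ∞ for a fixed t > 0, let (x^ε)_{ε>0} be càdlàg paths with sup_{s≥0} |x_s − x^ε_s| ≤ ε and |Δx^ε_s| ≤ K |Δx_s| for all s > 0 and ε > 0 and some constant K, and let f: ℝ → ℝ be continuously differentiable. Then Σ_{0<s≤t} (f(x_s) − f(x_{s−})) Δx^ε_s → Σ_{0<s≤t} (f(x_s) − f(x_{s−})) Δx_s as ε → 0+, both sums converging absolutely. -/

import Mathlib

open MeasureTheory Filter Topology Set
open scoped Classical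

noncomputable section

/-- The jump `Δf_s = f s - f (s-)` of a path at a point. -/
def jmp (f : ℝ → ℝ) (s : ℝ) : ℝ := f s - Function.leftLim f s

/-- A path `f : ℝ → ℝ` (thought of as a path on `[0,∞)`) is càdlàg: right-continuous at
every `t ≥ 0` and with finite left limits at every `t > 0`. -/
def Cadlag (f : ℝ → ℝ) : Prop :=
  (∀ t : ℝ, 0 ≤ t → ContinuousWithinAt f (Ici t) t) ∧
    ∀ t : ℝ, 0 < t → Tendsto f (𝓝[<] t) (𝓝 (Function.leftLim f t))

/-- `p = (u, v)` is a decomposition of `y` on `[0,∞)` as a difference of two nondecreasing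
right-continuous functions. -/
def IsBVDecompOn (y : ℝ → ℝ) (p : StieltjesFunction ℝ × StieltjesFunction ℝ) : Prop :=
  ∀ s : ℝ, 0 ≤ s → y s = p.1 s - p.2 s

/-- `y` has locally finite total variation on `[0,∞)`: for right-continuous `y` with left
limits this is equivalent to admitting a Jordan decomposition `y = u - v` with `u, v`
nondecreasing and right-continuous. -/
def LocBV (y : ℝ → ℝ) : Prop := ∃ p, IsBVDecompOn y p

/-- The Lebesgue–Stieltjes integral `∫_{(0,t]} g dy` of `g` with respect to the signed
Lebesgue–Stieltjes measure `μ_u - μ_v`, where `y = u - v` with `u, v` nondecreasing and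
right-continuous.  (For integrable `g` its value does not depend on the choice of the
decomposition.) -/
def lsInt (y g : ℝ → ℝ) (t : ℝ) : ℝ :=
  if h : ∃ p, IsBVDecompOn y p then
    (∫ s in Ioc (0:ℝ) t, g s ∂(h.choose.1.measure)) -
      ∫ s in Ioc (0:ℝ) t, g s ∂(h.choose.2.measure)
  else 0

/-- The integral `∫_{(0,t]} |g| |dy|` of `|g|` with respect to the total variation measure of
the signed Lebesgue–Stieltjes measure of `y`; it is computed from a minimal (mutually
singular on `(0,∞)`) decomposition of `y`, for which the total variation measure is
`μ_u + μ_v`. -/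
def lsAbs (y g : ℝ → ℝ) (t : ℝ) : ℝ :=
  if h : ∃ p, IsBVDecompOn y p ∧
      (p.1.measure.restrict (Ioi 0)).MutuallySingular (p.2.measure.restrict (Ioi 0)) then
    ∫ s in Ioc (0:ℝ) t, |g s| ∂(h.choose.1.measure + h.choose.2.measure)
  else 0

/-- The truncated variation of `x` on `[a,b]` with truncation parameter `ε`. -/
def TTV (x : ℝ → ℝ) (a b ε : ℝ) : ℝ :=
  sSup {v : ℝ | ∃ (n : ℕ) (t : ℕ → ℝ), a ≤ t 0 ∧ t n ≤ b ∧ (∀ i, i < n → t i < t (i + 1)) ∧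
    v = ∑ i ∈ Finset.range n, max (|x (t (i + 1)) - x (t i)| - ε) 0}

/-- The upward truncated variation of `x` on `[a,b]` with truncation parameter `ε`. -/
def UTV (x : ℝ → ℝ) (a b ε : ℝ) : ℝ :=
  sSup {v : ℝ | ∃ (n : ℕ) (t : ℕ → ℝ), a ≤ t 0 ∧ t n ≤ b ∧ (∀ i, i < n → t i < t (i + 1)) ∧
    v = ∑ i ∈ Finset.range n, max (x (t (i + 1)) - x (t i) - ε) 0}

/-- The downward truncated variation of `x` on `[a,b]` with truncation parameter `ε`. -/
def DTV (x : ℝ → ℝ) (a b ε : ℝ) : ℝ :=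
  sSup {v : ℝ | ∃ (n : ℕ) (t : ℕ → ℝ), a ≤ t 0 ∧ t n ≤ b ∧ (∀ i, i < n → t i < t (i + 1)) ∧
    v = ∑ i ∈ Finset.range n, max (x (t i) - x (t (i + 1)) - ε) 0}

/-- The standing assumptions: `x` is càdlàg with `Σ_{0<s≤t} (Δx_s)² < ∞` for all `t > 0`;
`𝒳 = (xe ε)_{ε>0}` is a family of càdlàg paths of locally finite total variation with
`sup_{s ≥ 0} |x s - xe ε s| ≤ ε`; `q = ⟨x⟩` is the uniform-on-compacts limit of
`2 ∫_{(0,·]} (x - xe ε) d(xe ε)` as `ε → 0+`;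
`sup_{ε>0} ∫_{(0,t]} |x - xe ε| |d(xe ε)| < ∞` for every `t > 0`; and there is a constant
`K` with `|Δ(xe ε)_s| ≤ K |Δx_s|` for all `s > 0` and `ε > 0`. -/
structure StandingAssumptions (x : ℝ → ℝ) (xe : ℝ → ℝ → ℝ) (q : ℝ → ℝ) : Prop where
  cadlag_x : Cadlag x
  jumps_sq_summable : ∀ t : ℝ, 0 < t → Summable fun s : Ioc (0:ℝ) t => jmp x (s : ℝ) ^ 2
  cadlag_xe : ∀ ε : ℝ, 0 < ε → Cadlag (xe ε)
  bv_xe : ∀ ε : ℝ, 0 < ε → LocBV (xe ε)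
  approx : ∀ ε : ℝ, 0 < ε → ∀ s : ℝ, 0 ≤ s → |x s - xe ε s| ≤ ε
  qv_unif : ∀ T : ℝ, 0 ≤ T →
    TendstoUniformlyOn (fun ε s => 2 * lsInt (xe ε) (fun r => x r - xe ε r) s) q
      (𝓝[>] 0) (Icc 0 T)
  bdd : ∀ t : ℝ, 0 < t → ∃ C : ℝ, ∀ ε : ℝ, 0 < ε →
    lsAbs (xe ε) (fun r => x r - xe ε r) t ≤ C
  jump_bdd : ∃ K : ℝ, ∀ ε : ℝ, 0 < ε → ∀ s : ℝ, 0 < s → |jmp (xe ε) s| ≤ K * |jmp x s|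

/-- A càdlàg path is bounded on `[0, t]`. -/
lemma cadlag_bdd {x : ℝ → ℝ} (hx : Cadlag x) {t : ℝ} (ht : 0 ≤ t) :
    ∃ M : ℝ, ∀ s ∈ Icc (0:ℝ) t, |x s| ≤ M := by
  have key : ∀ u : ℝ, ∃ M : ℝ, u ∈ Icc (0:ℝ) t →
      {r | r ∈ Icc (0:ℝ) t → |x r| ≤ M} ∈ 𝓝 u := by
    intro u
    refine ⟨max (|x u| + 1) (|Function.leftLim x u| + 1), fun hu => ?_⟩
    have hleft : ∀ᶠ r in 𝓝[<] u, r ∈ Icc (0:ℝ) t →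
        |x r| ≤ max (|x u| + 1) (|Function.leftLim x u| + 1) := by
      rcases lt_or_eq_of_le hu.1 with hu0 | hu0
      · have h1 : Tendsto (fun r => |x r|) (𝓝[<] u) (𝓝 |Function.leftLim x u|) :=
          (hx.2 u hu0).abs
        filter_upwards [h1.eventually_lt_const (lt_add_one _)] with r hr _
        exact le_max_of_le_right hr.le
      · filter_upwards [self_mem_nhdsWithin] with r hr hri
        exfalso
        rw [mem_Iio, ← hu0] at hr
        exact absurd hri.1 (not_le.mpr hr)
    have hright : ∀ᶠ r in 𝓝[≥] u, r ∈ Icc (0:ℝ) t →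
        |x r| ≤ max (|x u| + 1) (|Function.leftLim x u| + 1) := by
      have h1 : Tendsto (fun r => |x r|) (𝓝[≥] u) (𝓝 |x u|) := (hx.1 u hu.1).abs
      filter_upwards [h1.eventually_lt_const (lt_add_one _)] with r hr _
      exact le_max_of_le_left hr.le
    rw [← nhdsLT_sup_nhdsGE u, mem_sup]
    exact ⟨hleft, hright⟩
  choose Mu hMu using key
  obtain ⟨F, hFsub, hcov⟩ := isCompact_Icc.elim_nhds_subcover
    (fun u => {r | r ∈ Icc (0:ℝ) t → |x r| ≤ Mu u}) (fun u hu => hMu u hu)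
  have h0mem : (0:ℝ) ∈ Icc (0:ℝ) t := left_mem_Icc.mpr ht
  have hFne : F.Nonempty := by
    rcases mem_iUnion₂.mp (hcov h0mem) with ⟨u, hu, _⟩
    exact ⟨u, hu⟩
  refine ⟨F.sup' hFne Mu, fun s hs => ?_⟩
  rcases mem_iUnion₂.mp (hcov hs) with ⟨u, huF, hsu⟩
  exact le_trans (hsu hs) (Finset.le_sup' Mu huF)

/-- If two càdlàg paths are uniformly `ε`-close on `[0,∞)`, their jumps differ by at
most `2ε`. -/
lemma jmp_diff_le {x y : ℝ → ℝ} (hx : Cadlag x) (hy : Cadlag y) {ε : ℝ}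
    (happ : ∀ s : ℝ, 0 ≤ s → |x s - y s| ≤ ε) {s : ℝ} (hs : 0 < s) :
    |jmp y s - jmp x s| ≤ 2 * ε := by
  have hLx := hx.2 s hs
  have hLy := hy.2 s hs
  have hL : |Function.leftLim x s - Function.leftLim y s| ≤ ε := by
    have htend : Tendsto (fun r => |x r - y r|) (𝓝[<] s)
        (𝓝 |Function.leftLim x s - Function.leftLim y s|) := (hLx.sub hLy).abs
    refine le_of_tendsto htend ?_
    filter_upwards [Ioo_mem_nhdsLT_of_mem (⟨hs, le_refl s⟩ : s ∈ Ioc 0 s)] with r hr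
    exact happ r hr.1.le
  have h0 : |x s - y s| ≤ ε := happ s hs.le
  have heq : jmp y s - jmp x s
      = -(x s - y s) + (Function.leftLim x s - Function.leftLim y s) := by
    unfold jmp; ring
  calc |jmp y s - jmp x s|
      ≤ |(-(x s - y s))| + |Function.leftLim x s - Function.leftLim y s| := by
        rw [heq]; exact abs_add_le _ _
    _ ≤ ε + ε := by rw [abs_neg]; exact add_le_add h0 hL
    _ = 2 * ε := by ring

/-- `Σ_{0<s≤t} Δ(f∘x)_s Δxᵉ_s → Σ_{0<s≤t} Δ(f∘x)_s Δx_s` as `ε → 0+`,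
all sums converging absolutely. -/
theorem statement11 (t : ℝ) (ht : 0 < t) (x : ℝ → ℝ) (hx : Cadlag x)
    (hsum : Summable fun s : Ioc (0:ℝ) t => jmp x (s : ℝ) ^ 2)
    (xe : ℝ → ℝ → ℝ) (hcad : ∀ ε : ℝ, 0 < ε → Cadlag (xe ε))
    (happ : ∀ ε : ℝ, 0 < ε → ∀ s : ℝ, 0 ≤ s → |x s - xe ε s| ≤ ε)
    (K : ℝ) (hjump : ∀ ε : ℝ, 0 < ε → ∀ s : ℝ, 0 < s → |jmp (xe ε) s| ≤ K * |jmp x s|)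
    (f f' : ℝ → ℝ) (hf : ∀ y, HasDerivAt f (f' y) y) (hf' : Continuous f') :
    (∀ ε : ℝ, 0 < ε → Summable fun s : Ioc (0:ℝ) t =>
        |(f (x (s : ℝ)) - f (Function.leftLim x (s : ℝ))) * jmp (xe ε) (s : ℝ)|) ∧
    (Summable fun s : Ioc (0:ℝ) t =>
        |(f (x (s : ℝ)) - f (Function.leftLim x (s : ℝ))) * jmp x (s : ℝ)|) ∧
    Tendsto (fun ε => ∑' s : Ioc (0:ℝ) t,
        (f (x (s : ℝ)) - f (Function.leftLim x (s : ℝ))) * jmp (xe ε) (s : ℝ))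
      (𝓝[>] (0:ℝ))
      (𝓝 (∑' s : Ioc (0:ℝ) t,
        (f (x (s : ℝ)) - f (Function.leftLim x (s : ℝ))) * jmp x (s : ℝ))) := by
  obtain ⟨M, hM⟩ := cadlag_bdd hx ht.le
  have hMll : ∀ s ∈ Ioc (0:ℝ) t, |Function.leftLim x s| ≤ M := by
    intro s hs
    have htend : Tendsto (fun r => |x r|) (𝓝[<] s) (𝓝 |Function.leftLim x s|) :=
      (hx.2 s hs.1).abs
    refine le_of_tendsto htend ?_
    filter_upwards [Ioo_mem_nhdsLT_of_mem (⟨hs.1, le_refl s⟩ : s ∈ Ioc 0 s)] with r hr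
    exact hM r ⟨hr.1.le, hr.2.le.trans hs.2⟩
  -- a Lipschitz constant for `f` on `[-M, M]`
  obtain ⟨L0, hL0⟩ :=
    (isCompact_Icc (a := -M) (b := M)).exists_bound_of_continuousOn hf'.continuousOn
  set L : ℝ := max L0 0 with hLdef
  have hLnn : 0 ≤ L := le_max_right _ _
  have hlip : ∀ a ∈ Icc (-M) M, ∀ b ∈ Icc (-M) M, |f a - f b| ≤ L * |a - b| := by
    intro a ha b hb
    have := (convex_Icc (-M) M).norm_image_sub_le_of_norm_hasDerivWithin_le
      (f' := f') (C := L) (fun y _ => (hf y).hasDerivWithinAt)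
      (fun y hy => le_trans (hL0 y hy) (le_max_left L0 0)) hb ha
    simpa [Real.norm_eq_abs] using this
  have hg : ∀ s ∈ Ioc (0:ℝ) t,
      |f (x s) - f (Function.leftLim x s)| ≤ L * |jmp x s| := by
    intro s hs
    have h1 : x s ∈ Icc (-M) M := mem_Icc.mpr (abs_le.mp (hM s ⟨hs.1.le, hs.2⟩))
    have h2 : Function.leftLim x s ∈ Icc (-M) M := mem_Icc.mpr (abs_le.mp (hMll s hs))
    simpa [jmp] using hlip (x s) h1 (Function.leftLim x s) h2
  -- the uniform bound on the terms
  have hbd : ∀ ε : ℝ, 0 < ε → ∀ s : Ioc (0:ℝ) t,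
      |(f (x (s:ℝ)) - f (Function.leftLim x (s:ℝ))) * jmp (xe ε) (s:ℝ)|
        ≤ L * K * jmp x (s:ℝ) ^ 2 := by
    intro ε hε s
    have h1 := hg (s:ℝ) s.2
    have h2 := hjump ε hε (s:ℝ) s.2.1
    rw [abs_mul]
    calc |f (x (s:ℝ)) - f (Function.leftLim x (s:ℝ))| * |jmp (xe ε) (s:ℝ)|
        ≤ (L * |jmp x (s:ℝ)|) * (K * |jmp x (s:ℝ)|) :=
          mul_le_mul h1 h2 (abs_nonneg _) (mul_nonneg hLnn (abs_nonneg _))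
      _ = L * K * (|jmp x (s:ℝ)| * |jmp x (s:ℝ)|) := by ring
      _ = L * K * jmp x (s:ℝ) ^ 2 := by rw [abs_mul_abs_self, ← sq]
  have hbd2 : ∀ s : Ioc (0:ℝ) t,
      |(f (x (s:ℝ)) - f (Function.leftLim x (s:ℝ))) * jmp x (s:ℝ)|
        ≤ L * jmp x (s:ℝ) ^ 2 := by
    intro s
    have h1 := hg (s:ℝ) s.2
    rw [abs_mul]
    calc |f (x (s:ℝ)) - f (Function.leftLim x (s:ℝ))| * |jmp x (s:ℝ)|
        ≤ (L * |jmp x (s:ℝ)|) * |jmp x (s:ℝ)| :=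
          mul_le_mul_of_nonneg_right h1 (abs_nonneg _)
      _ = L * (|jmp x (s:ℝ)| * |jmp x (s:ℝ)|) := by ring
      _ = L * jmp x (s:ℝ) ^ 2 := by rw [abs_mul_abs_self, ← sq]
  refine ⟨?_, ?_, ?_⟩
  · intro ε hε
    refine Summable.of_nonneg_of_le (fun s => abs_nonneg _)
      (fun s => hbd ε hε s) ?_
    simpa [mul_assoc] using (hsum.mul_left (L * K))
  · refine Summable.of_nonneg_of_le (fun s => abs_nonneg _)
      (fun s => hbd2 s) ?_
    exact hsum.mul_left L
  · refine tendsto_tsum_of_dominated_convergence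
      (bound := fun s : Ioc (0:ℝ) t => L * K * jmp x (s:ℝ) ^ 2)
      (by simpa [mul_assoc] using (hsum.mul_left (L * K))) (fun s => ?_) ?_
    · have hj : Tendsto (fun ε => jmp (xe ε) (s:ℝ)) (𝓝[>] (0:ℝ)) (𝓝 (jmp x (s:ℝ))) := by
        rw [tendsto_iff_dist_tendsto_zero]
        refine squeeze_zero' (g := fun ε : ℝ => 2 * ε)
          (Eventually.of_forall fun ε => dist_nonneg) ?_ ?_
        · filter_upwards [self_mem_nhdsWithin] with ε hε
          rw [Real.dist_eq]
          exact jmp_diff_le hx (hcad ε hε) (fun r hr => happ ε hε r hr) s.2.1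
        · have h2 : Tendsto (fun ε : ℝ => 2 * ε) (𝓝 (0:ℝ)) (𝓝 (2 * 0)) :=
            tendsto_id.const_mul 2
          simpa using h2.mono_left nhdsWithin_le_nhds
      exact hj.const_mul _
    · filter_upwards [self_mem_nhdsWithin] with ε hε
      intro s
      rw [Real.norm_eq_abs]
      exact hbd ε hε s
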